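/- Core of Theorem 1 (continuity of the witnessed non-Markovianity). Let ι be a nonempty finite type and c ≥ 0 a real number. Let ρ₁, ρ₂, σ₁, σ₂ ∈ Matrix ι ι ℂ be Hermitian matrices (the Choi states of two processes Φ and Λ at times t₁, t₂), and let W₁, W₂, M₁, M₂ ∈ Matrix ι ι ℂ be Hermitian matrices (the optimal entanglement witnesses) satisfying for each i ∈ {1,2}: (a) ‖Wᵢ‖₁ ≤ c and ‖Mᵢ‖₁ ≤ c; (b) optimality of Wᵢ at ρᵢ: Re Tr(Wᵢ ρᵢ) ≤ Re Tr(Mᵢ ρᵢ); (c) optimality of Mᵢ at σᵢ: Re Tr(Mᵢ σᵢ) ≤ Re Tr(Wᵢ σᵢ). Define the witnessed non-Markovianities N_W := max(0, Re Tr(W₁ ρ₁) − Re Tr(W₂ ρ₂)) and N_M := max(0, Re Tr(M₁ σ₁) − Re Tr(M₂ σ₂)). Then |N_W − N_M| ≤ c·(‖ρ₁ − σ₁‖₁ + ‖ρ₂ − σ₂‖₁). -/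

import Mathlib

open Matrix ComplexOrder

/-- The trace norm of a complex square matrix: the trace of the positive semidefinite
square root of `Aᴴ * A`. -/
noncomputable def traceNorm {ι : Type*} [Fintype ι] [DecidableEq ι]
    (A : Matrix ι ι ℂ) : ℝ :=
  (((Matrix.posSemidef_conjTranspose_mul_self A).1.eigenvectorUnitary.1 *
      diagonal (((↑) : ℝ → ℂ) ∘ (√·) ∘ (Matrix.posSemidef_conjTranspose_mul_self A).1.eigenvalues) *
      (star (Matrix.posSemidef_conjTranspose_mul_self A).1.eigenvectorUnitary :
        Matrix ι ι ℂ)).trace).re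

open scoped MatrixOrder

lemma traceNorm_eq_sum_abs {ι : Type*} [Fintype ι] [DecidableEq ι]
    {A : Matrix ι ι ℂ} (hA : A.IsHermitian) :
    traceNorm A = ∑ i, |hA.eigenvalues i| := by
  set U : Matrix ι ι ℂ := (hA.eigenvectorUnitary : Matrix ι ι ℂ)
  have hU : star U * U = 1 := (Matrix.mem_unitaryGroup_iff').mp hA.eigenvectorUnitary.2
  set B : Matrix ι ι ℂ :=
    U * diagonal ((↑) ∘ (fun i => |hA.eigenvalues i|)) * star U with hBdef
  have hBpsd : B.PosSemidef := by
    rw [hBdef, Matrix.star_eq_conjTranspose U]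
    refine Matrix.PosSemidef.mul_mul_conjTranspose_same ?_ U
    refine Matrix.posSemidef_diagonal_iff.mpr fun i => ?_
    simp only [Function.comp_apply]
    exact_mod_cast Complex.zero_le_real.mpr (abs_nonneg _)
  have hB2 : B ^ 2 = Aᴴ * A := by
    have hUU : U * star U = 1 := (Matrix.mem_unitaryGroup_iff).mp hA.eigenvectorUnitary.2
    have hAspec : A = U * diagonal ((↑) ∘ hA.eigenvalues) * star U := hA.spectral_theorem
    have : Aᴴ * A = A * A := by rw [hA.eq]
    rw [this, hAspec, hBdef]
    rw [pow_two]
    calc (U * diagonal ((↑) ∘ fun i => |hA.eigenvalues i|) * star U) *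
        (U * diagonal ((↑) ∘ fun i => |hA.eigenvalues i|) * star U)
        = U * (diagonal ((↑) ∘ fun i => |hA.eigenvalues i|) * ((star U * U) *
            diagonal ((↑) ∘ fun i => |hA.eigenvalues i|))) * star U := by
          simp only [Matrix.mul_assoc]
      _ = U * (diagonal ((↑) ∘ hA.eigenvalues) * ((star U * U) *
            diagonal ((↑) ∘ hA.eigenvalues))) * star U := by
          rw [hU, Matrix.one_mul, Matrix.one_mul, Matrix.diagonal_mul_diagonal,
            Matrix.diagonal_mul_diagonal]
          congr 2
          funext i
          simp [← Complex.ofReal_mul, ← abs_mul, abs_mul_self (hA.eigenvalues i), sq_abs]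
      _ = (U * diagonal ((↑) ∘ hA.eigenvalues) * star U) *
            (U * diagonal ((↑) ∘ hA.eigenvalues) * star U) := by
          simp only [Matrix.mul_assoc]
  have hBeq : B = (Matrix.posSemidef_conjTranspose_mul_self A).1.eigenvectorUnitary.1 *
      diagonal (((↑) : ℝ → ℂ) ∘ (√·) ∘ (Matrix.posSemidef_conjTranspose_mul_self A).1.eigenvalues) *
      (star (Matrix.posSemidef_conjTranspose_mul_self A).1.eigenvectorUnitary :
        Matrix ι ι ℂ) := by
    have hP := Matrix.posSemidef_conjTranspose_mul_self A
    have h1 : B = CFC.sqrt (Aᴴ * A) :=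
      (CFC.sqrt_unique (a := Aᴴ * A) (b := B) (by rw [← pow_two]; exact hB2) hBpsd.nonneg).symm
    rw [h1, CFC.sqrt_eq_cfc, cfc_nnreal_eq_real _ (Aᴴ * A) hP.nonneg, hP.1.cfc_eq]
    simp only [IsHermitian.cfc]
    have hf : ((fun x : ℝ => ((NNReal.sqrt x.toNNReal : ℝ))) ∘ hP.1.eigenvalues)
        = (fun x : ℝ => √x) ∘ hP.1.eigenvalues := by
      funext i
      simp [Real.coe_sqrt, max_eq_left (hP.eigenvalues_nonneg i)]
    rw [hf]
    rfl
  rw [traceNorm, ← hBeq, hBdef]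
  rw [Matrix.trace_mul_comm, ← Matrix.mul_assoc, hU, Matrix.one_mul, Matrix.trace_diagonal]
  simp

lemma abs_re_trace_mul_le {ι : Type*} [Fintype ι] [DecidableEq ι]
    {W A : Matrix ι ι ℂ} (hW : W.IsHermitian) (hA : A.IsHermitian) :
    |(((W * A).trace).re)| ≤ traceNorm W * traceNorm A := by
  set U : Matrix ι ι ℂ := (hW.eigenvectorUnitary : Matrix ι ι ℂ) with hUdef
  set V : Matrix ι ι ℂ := (hA.eigenvectorUnitary : Matrix ι ι ℂ) with hVdef
  set Q : Matrix ι ι ℂ := star U * V with hQdef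
  have hUU : star U * U = 1 := (Matrix.mem_unitaryGroup_iff').mp hW.eigenvectorUnitary.2
  have hVV : V * star V = 1 := (Matrix.mem_unitaryGroup_iff).mp hA.eigenvectorUnitary.2
  have hsQ : star Q = star V * U := by rw [hQdef, Matrix.star_mul, star_star]
  have hQQ : Q * star Q = 1 := by
    rw [hQdef, hsQ]
    calc star U * V * (star V * U) = star U * (V * star V) * U := by
          simp only [Matrix.mul_assoc]
      _ = 1 := by rw [hVV, Matrix.mul_one, hUU]
  have hrow : ∀ i j, Complex.normSq (Q i j) ≤ 1 := by
    intro i j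
    have h1 : (∑ k, Q i k * (starRingEnd ℂ) (Q i k)) = 1 := by
      have := congrArg (fun M : Matrix ι ι ℂ => M i i) hQQ
      simpa [Matrix.mul_apply, Matrix.star_apply] using this
    have h2 : (∑ k, Complex.normSq (Q i k)) = 1 := by
      have := congrArg Complex.re h1
      simpa [Complex.mul_conj, Complex.re_sum] using this
    rw [← h2]
    exact Finset.single_le_sum (fun k _ => Complex.normSq_nonneg _) (Finset.mem_univ j)
  set l : ι → ℝ := hW.eigenvalues
  set m : ι → ℝ := hA.eigenvalues
  have htrace : (W * A).trace
      = (Matrix.diagonal (Complex.ofReal ∘ l) *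
          (Q * Matrix.diagonal (Complex.ofReal ∘ m) * star Q)).trace := by
    have hWs : W = U * Matrix.diagonal (Complex.ofReal ∘ l) * star U := hW.spectral_theorem
    have hAs : A = V * Matrix.diagonal (Complex.ofReal ∘ m) * star V := hA.spectral_theorem
    calc (W * A).trace
        = (U * (Matrix.diagonal (Complex.ofReal ∘ l) * Q *
            Matrix.diagonal (Complex.ofReal ∘ m) * star V)).trace := by
          rw [hWs, hAs]; congr 1; simp only [hQdef, Matrix.mul_assoc]
      _ = ((Matrix.diagonal (Complex.ofReal ∘ l) * Q *
            Matrix.diagonal (Complex.ofReal ∘ m) * star V) * U).trace :=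
          Matrix.trace_mul_comm _ _
      _ = _ := by rw [Matrix.mul_assoc _ (star V) U, ← hsQ]; simp only [Matrix.mul_assoc]
  have hentry : (Matrix.diagonal (Complex.ofReal ∘ l) *
          (Q * Matrix.diagonal (Complex.ofReal ∘ m) * star Q)).trace
      = ∑ i, ∑ j, (l i : ℂ) * (Q i j * (m j : ℂ) * (starRingEnd ℂ) (Q i j)) := by
    rw [Matrix.trace]
    refine Finset.sum_congr rfl fun i _ => ?_
    rw [Matrix.diag_apply, Matrix.diagonal_mul, Matrix.mul_apply, Finset.mul_sum]
    refine Finset.sum_congr rfl fun j _ => ?_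
    rw [Matrix.mul_diagonal, Matrix.star_apply]
    simp [mul_assoc]
  have hre : ((W * A).trace).re = ∑ i, ∑ j, l i * m j * Complex.normSq (Q i j) := by
    have hterm : ∀ i j, ((l i : ℂ)) * (Q i j * (m j : ℂ) * (starRingEnd ℂ) (Q i j))
        = ((l i * m j * Complex.normSq (Q i j) : ℝ) : ℂ) := by
      intro i j
      rw [mul_comm (Q i j) ((m j : ℂ)), mul_assoc ((m j : ℂ)), Complex.mul_conj]
      push_cast
      ring
    rw [htrace, hentry]
    simp [hterm, Complex.re_sum]
  rw [hre, traceNorm_eq_sum_abs hW, traceNorm_eq_sum_abs hA]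
  calc |∑ i, ∑ j, l i * m j * Complex.normSq (Q i j)|
      ≤ ∑ i, ∑ j, |l i * m j * Complex.normSq (Q i j)| := by
        refine (Finset.abs_sum_le_sum_abs _ _).trans ?_
        exact Finset.sum_le_sum fun i _ => Finset.abs_sum_le_sum_abs _ _
    _ ≤ ∑ i, ∑ j, |l i| * |m j| := by
        refine Finset.sum_le_sum fun i _ => Finset.sum_le_sum fun j _ => ?_
        rw [abs_mul, abs_mul]
        calc |l i| * |m j| * |Complex.normSq (Q i j)| ≤ |l i| * |m j| * 1 := by
              refine mul_le_mul_of_nonneg_left ?_ (by positivity)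
              rw [abs_of_nonneg (Complex.normSq_nonneg _)]
              exact hrow i j
          _ = |l i| * |m j| := by ring
    _ = (∑ i, |l i|) * (∑ j, |m j|) := by rw [Finset.sum_mul_sum]

lemma traceNorm_nonneg' {ι : Type*} [Fintype ι] [DecidableEq ι]
    {A : Matrix ι ι ℂ} (hA : A.IsHermitian) : 0 ≤ traceNorm A := by
  rw [traceNorm_eq_sum_abs hA]; positivity

lemma sandwich {ι : Type*} [Fintype ι] [DecidableEq ι]
    {c : ℝ} {W M ρ σ : Matrix ι ι ℂ}
    (hW : W.IsHermitian) (hM : M.IsHermitian) (hρ : ρ.IsHermitian) (hσ : σ.IsHermitian)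
    (hWn : traceNorm W ≤ c) (hMn : traceNorm M ≤ c)
    (h1 : ((W * ρ).trace).re ≤ ((M * ρ).trace).re)
    (h2 : ((M * σ).trace).re ≤ ((W * σ).trace).re) :
    |((W * ρ).trace).re - ((M * σ).trace).re| ≤ c * traceNorm (ρ - σ) := by
  have hρσ : (ρ - σ).IsHermitian := hρ.sub hσ
  have htn : 0 ≤ traceNorm (ρ - σ) := traceNorm_nonneg' hρσ
  have hexp : ∀ X : Matrix ι ι ℂ,
      ((X * (ρ - σ)).trace).re = ((X * ρ).trace).re - ((X * σ).trace).re := by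
    intro X
    rw [Matrix.mul_sub, Matrix.trace_sub, Complex.sub_re]
  have hWc : |((W * ρ).trace).re - ((W * σ).trace).re| ≤ c * traceNorm (ρ - σ) := by
    rw [← hexp W]
    exact (abs_re_trace_mul_le hW hρσ).trans (mul_le_mul_of_nonneg_right hWn htn)
  have hMc : |((M * ρ).trace).re - ((M * σ).trace).re| ≤ c * traceNorm (ρ - σ) := by
    rw [← hexp M]
    exact (abs_re_trace_mul_le hM hρσ).trans (mul_le_mul_of_nonneg_right hMn htn)
  rw [abs_le] at *
  constructor
  · linarith [hWc.1]
  · linarith [hMc.2]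

/-- Continuity of the witnessed non-Markovianity (core of Theorem 1). -/
theorem witnessed_nonMarkovianity_continuity
    {ι : Type*} [Fintype ι] [DecidableEq ι] [Nonempty ι]
    (c : ℝ) (hc : 0 ≤ c)
    (ρ₁ ρ₂ σ₁ σ₂ W₁ W₂ M₁ M₂ : Matrix ι ι ℂ)
    (hρ₁ : ρ₁.IsHermitian) (hρ₂ : ρ₂.IsHermitian)
    (hσ₁ : σ₁.IsHermitian) (hσ₂ : σ₂.IsHermitian)
    (hW₁ : W₁.IsHermitian) (hW₂ : W₂.IsHermitian)
    (hM₁ : M₁.IsHermitian) (hM₂ : M₂.IsHermitian)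
    (hW₁n : traceNorm W₁ ≤ c) (hW₂n : traceNorm W₂ ≤ c)
    (hM₁n : traceNorm M₁ ≤ c) (hM₂n : traceNorm M₂ ≤ c)
    (hoptW₁ : ((W₁ * ρ₁).trace).re ≤ ((M₁ * ρ₁).trace).re)
    (hoptW₂ : ((W₂ * ρ₂).trace).re ≤ ((M₂ * ρ₂).trace).re)
    (hoptM₁ : ((M₁ * σ₁).trace).re ≤ ((W₁ * σ₁).trace).re)
    (hoptM₂ : ((M₂ * σ₂).trace).re ≤ ((W₂ * σ₂).trace).re) :
    |max 0 (((W₁ * ρ₁).trace).re - ((W₂ * ρ₂).trace).re) -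
      max 0 (((M₁ * σ₁).trace).re - ((M₂ * σ₂).trace).re)|
      ≤ c * (traceNorm (ρ₁ - σ₁) + traceNorm (ρ₂ - σ₂)) := by
  have d1 := sandwich hW₁ hM₁ hρ₁ hσ₁ hW₁n hM₁n hoptW₁ hoptM₁
  have d2 := sandwich hW₂ hM₂ hρ₂ hσ₂ hW₂n hM₂n hoptW₂ hoptM₂
  set a₁ := ((W₁ * ρ₁).trace).re
  set a₂ := ((W₂ * ρ₂).trace).re
  set b₁ := ((M₁ * σ₁).trace).re
  set b₂ := ((M₂ * σ₂).trace).re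
  calc |max 0 (a₁ - a₂) - max 0 (b₁ - b₂)|
      ≤ |(a₁ - a₂) - (b₁ - b₂)| := by
        rw [max_comm 0 (a₁ - a₂), max_comm 0 (b₁ - b₂)]
        exact abs_max_sub_max_le_abs _ _ _
    _ = |(a₁ - b₁) - (a₂ - b₂)| := by ring_nf
    _ ≤ |a₁ - b₁| + |a₂ - b₂| := abs_sub _ _
    _ ≤ c * traceNorm (ρ₁ - σ₁) + c * traceNorm (ρ₂ - σ₂) := add_le_add d1 d2
    _ = c * (traceNorm (ρ₁ - σ₁) + traceNorm (ρ₂ - σ₂)) := by ring
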